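/- Let H ⊆ ℝ^m be a linear subspace, p ∈ ℝ^m_{>0}, and P = (p + H) ∩ ℝ^m_{≥0}. Suppose x(n) is a sequence in the relative interior of P, u ∈ ℝ^m is a unit vector such that the support of the negative part u⁻ is contained in the set of indices i where x(n)_i → 0, the support of the positive part u⁺ is contained in the set of indices i where x(n)_i → +∞, and every other coordinate of x(n) converges to a finite positive limit. Then u ∉ H^⊥. -/

import Mathlib

open scoped RealInnerProductSpace
open Filter

/-- if a sequence in the relative interior of `P = (p + H) ∩ ℝ^m_{≥0}`
has coordinates tending to `0` exactly where a unit vector `u` is negative, to `+∞`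
where `u` is positive, and to finite positive limits elsewhere, then `u ∉ H^⊥`. -/
theorem outer_normal_cone_meets_Hperp_trivially {m : ℕ}
    (H : Submodule ℝ (EuclideanSpace ℝ (Fin m)))
    (p : EuclideanSpace ℝ (Fin m)) (hp : ∀ i, 0 < p i)
    (x : ℕ → EuclideanSpace ℝ (Fin m))
    (hxpos : ∀ n, ∀ i, 0 < x n i)
    (hxH : ∀ n, x n - p ∈ H)
    (u : EuclideanSpace ℝ (Fin m)) (hu : ‖u‖ = 1)
    (hneg : ∀ i, u i < 0 → Tendsto (fun n => x n i) atTop (nhds 0))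
    (hpos : ∀ i, 0 < u i → Tendsto (fun n => x n i) atTop atTop)
    (hzero : ∀ i, u i = 0 → ∃ L : ℝ, 0 < L ∧ Tendsto (fun n => x n i) atTop (nhds L)) :
    u ∉ Hᗮ := by
  intro hmem
  set c : ℝ := ∑ i, u i * p i with hc
  have key : ∀ n, ∑ i, u i * x n i = c := by
    intro n
    have h0 : ⟪x n - p, u⟫ = 0 :=
      (Submodule.mem_orthogonal H u).mp hmem _ (hxH n)
    have h1 : ∑ i, (x n i - p i) * u i = 0 := by
      simpa [PiLp.inner_apply, RCLike.inner_apply, mul_comm] using h0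
    have h2 : (∑ i, x n i * u i) - (∑ i, p i * u i) = 0 := by
      rw [← Finset.sum_sub_distrib]
      simpa [sub_mul] using h1
    have := sub_eq_zero.mp h2
    simp only [mul_comm] at this ⊢
    rw [this, hc]
    congr 1; ext i; ring
  have hune : u ≠ 0 := by
    intro h; rw [h, norm_zero] at hu; norm_num at hu
  by_cases hex : ∃ j, 0 < u j
  · obtain ⟨j, hj⟩ := hex
    -- u j * x n j → atTop
    have hgt : Tendsto (fun n => u j * x n j) atTop atTop :=
      (hpos j hj).const_mul_atTop hj
    -- sum over negatives tends to 0
    have hN : Tendsto (fun n => ∑ i ∈ Finset.univ.filter (fun i => u i < 0),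
        u i * x n i) atTop (nhds 0) := by
      have := tendsto_finset_sum (Finset.univ.filter (fun i => u i < 0))
        (fun i hi => by
          have hi' : u i < 0 := (Finset.mem_filter.mp hi).2
          simpa using (hneg i hi').const_mul (u i))
      simpa using this
    have hNev : ∀ᶠ n in atTop, -1 ≤ ∑ i ∈ Finset.univ.filter (fun i => u i < 0),
        u i * x n i := by
      have := hN.eventually (eventually_ge_nhds (by norm_num : (-1:ℝ) < 0))
      simpa using this
    have hbound : ∀ᶠ n in atTop, u j * x n j ≤ c + 1 := by
      filter_upwards [hNev] with n hn
      have hsplit : u j * x n j + ∑ i ∈ Finset.univ.erase j, u i * x n i = c := by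
        have h := Finset.add_sum_erase Finset.univ (fun i => u i * x n i)
          (Finset.mem_univ j)
        rw [key n] at h; exact h
      have hsub : (Finset.univ.filter (fun i => u i < 0)) ⊆ Finset.univ.erase j := by
        intro i hi
        have hi' : u i < 0 := (Finset.mem_filter.mp hi).2
        refine Finset.mem_erase.mpr ⟨?_, Finset.mem_univ i⟩
        intro h; rw [h] at hi'; linarith
      have hle : ∑ i ∈ Finset.univ.filter (fun i => u i < 0), u i * x n i ≤
          ∑ i ∈ Finset.univ.erase j, u i * x n i := by
        refine Finset.sum_le_sum_of_subset_of_nonneg hsub ?_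
        intro i _ hi
        have : ¬ u i < 0 := fun h => hi (Finset.mem_filter.mpr ⟨Finset.mem_univ i, h⟩)
        exact mul_nonneg (not_lt.mp this) (hxpos n i).le
      linarith
    have hgt' : ∀ᶠ n in atTop, c + 1 < u j * x n j := hgt.eventually_gt_atTop _
    obtain ⟨n, h1, h2⟩ := (hbound.and hgt').exists
    linarith
  · push_neg at hex
    obtain ⟨j, hj⟩ : ∃ j, u j ≠ 0 := by
      by_contra h; push_neg at h
      exact hune (PiLp.ext (by simpa using h))
    have hjneg : u j < 0 := lt_of_le_of_ne (hex j) hj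
    have hall : ∀ i, Tendsto (fun n => u i * x n i) atTop (nhds 0) := by
      intro i
      rcases lt_or_eq_of_le (hex i) with hi | hi
      · simpa using (hneg i hi).const_mul (u i)
      · have : (fun n => u i * x n i) = fun _ => (0:ℝ) := by
          funext n; rw [hi, zero_mul]
        rw [this]; exact tendsto_const_nhds
    have hsum : Tendsto (fun n => ∑ i, u i * x n i) atTop (nhds 0) := by
      have := tendsto_finset_sum Finset.univ (fun i _ => hall i)
      simpa using this
    have hconst : Tendsto (fun n => ∑ i, u i * x n i) atTop (nhds c) := by
      simp only [key]; exact tendsto_const_nhds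
    have hc0 : c = 0 := tendsto_nhds_unique hconst hsum
    have hlt : c < 0 := by
      have hsplit : u j * p j + ∑ i ∈ Finset.univ.erase j, u i * p i = c :=
        Finset.add_sum_erase Finset.univ (fun i => u i * p i) (Finset.mem_univ j)
      have h1 : u j * p j < 0 := mul_neg_of_neg_of_pos hjneg (hp j)
      have h2 : ∑ i ∈ Finset.univ.erase j, u i * p i ≤ 0 :=
        Finset.sum_nonpos (fun i _ => mul_nonpos_of_nonpos_of_nonneg (hex i) (hp i).le)
      linarith
    linarith
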